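/- Let $(E, \mathcal{F})$ be a nonempty clutter that is not the set of bases of a matroid. Then there exist $X, Y \in \mathcal{F}$ and three distinct elements $a, b, c \in X \triangle Y$ such that every $Z \in \mathcal{F}$ with $Z \subseteq X \cup Y$ satisfies $a \in Z$ or $\{b, c\} \subseteq Z$. -/

import Mathlib

open Set

/-- A failing exchange triple. -/
def FailTriple {E : Type*} (𝓕 : Set (Set E)) (X Y : Set E) (e : E) : Prop :=
  X ∈ 𝓕 ∧ Y ∈ 𝓕 ∧ e ∈ X ∧ e ∉ Y ∧ ∀ f ∈ Y, f ∉ X → insert f (X \ {e}) ∉ 𝓕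

lemma key_lemma {E : Type*} [Fintype E] {𝓕 : Set (Set E)} {X Y : Set E} {e : E} {n : ℕ}
    (hmin : ∀ X' Y' e', FailTriple 𝓕 X' Y' e' → n ≤ (X' ∪ Y').ncard)
    (h : FailTriple 𝓕 X Y e) (hn : (X ∪ Y).ncard = n) :
    ∀ Z ∈ 𝓕, Z ⊆ X ∪ Y → e ∉ Z → Y \ X ⊆ Z := by
  intro Z hZ hZsub heZ y hy
  obtain ⟨hX, hY, heX, heY, hfail⟩ := h
  have hfail' : FailTriple 𝓕 X Z e := by
    refine ⟨hX, hZ, heX, heZ, fun f hf hfX hmem => ?_⟩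
    have : f ∈ Y := (hZsub hf).resolve_left hfX
    exact hfail f this hfX hmem
  have h1 : n ≤ (X ∪ Z).ncard := hmin X Z e hfail'
  have hsub : X ∪ Z ⊆ X ∪ Y := union_subset subset_union_left hZsub
  have heq : X ∪ Z = X ∪ Y :=
    Set.eq_of_subset_of_ncard_le hsub (by omega) (toFinite _)
  have : y ∈ X ∪ Z := heq ▸ (subset_union_right hy.1)
  exact this.resolve_left hy.2

theorem stmt11 {E : Type*} [Fintype E] (𝓕 : Set (Set E)) (hne : 𝓕.Nonempty)
    (hclutter : ∀ X ∈ 𝓕, ∀ Y ∈ 𝓕, X ⊆ Y → X = Y)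
    (hnonmatroid : ¬ ∃ M : Matroid E, {B : Set E | M.IsBase B} = 𝓕) :
    ∃ X ∈ 𝓕, ∃ Y ∈ 𝓕, ∃ a b c : E,
      a ∈ (X \ Y) ∪ (Y \ X) ∧ b ∈ (X \ Y) ∪ (Y \ X) ∧ c ∈ (X \ Y) ∪ (Y \ X) ∧
      a ≠ b ∧ a ≠ c ∧ b ≠ c ∧
      ∀ Z ∈ 𝓕, Z ⊆ X ∪ Y → a ∈ Z ∨ ({b, c} : Set E) ⊆ Z := by
  classical
  by_cases hex : ∀ X ∈ 𝓕, ∀ Y ∈ 𝓕, ∀ e ∈ X \ Y, ∃ f ∈ Y \ X, insert f (X \ {e}) ∈ 𝓕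
  · exfalso
    apply hnonmatroid
    obtain ⟨B0, hB0⟩ := hne
    refine ⟨Matroid.ofExistsFiniteIsBase Set.univ (· ∈ 𝓕) ⟨B0, hB0, toFinite _⟩
      (fun X Y hX hY a ha => hex X hX Y hY a ha) (fun B _ => subset_univ B), ?_⟩
    ext B; exact Iff.rfl
  · push_neg at hex
    obtain ⟨X0, hX0, Y0, hY0, e0, he0, hfail0⟩ := hex
    have hP : ∃ n, ∃ X Y, ∃ e : E, FailTriple 𝓕 X Y e ∧ (X ∪ Y).ncard = n :=
      ⟨(X0 ∪ Y0).ncard, X0, Y0, e0,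
        ⟨hX0, hY0, he0.1, he0.2, fun f hf hfX => hfail0 f ⟨hf, hfX⟩⟩, rfl⟩
    obtain ⟨X, Y, e, hfail, hn⟩ := Nat.find_spec hP
    set n := Nat.find hP with hndef
    have hmin : ∀ X' Y' e', FailTriple 𝓕 X' Y' e' → n ≤ (X' ∪ Y').ncard :=
      fun X' Y' e' h => Nat.find_le ⟨X', Y', e', h, rfl⟩
    obtain ⟨hX, hY, heX, heY, hf5⟩ := hfail
    -- Y \ X is nonempty
    have hYX : (Y \ X).Nonempty := by
      rcases Set.eq_empty_or_nonempty (Y \ X) with h | h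
      · have : Y ⊆ X := diff_eq_empty.mp h
        have := hclutter Y hY X hX this
        exact absurd (this ▸ heX) heY
      · exact h
    by_cases h2 : ∃ b ∈ Y \ X, ∃ c ∈ Y \ X, b ≠ c
    · obtain ⟨b, hb, c, hc, hbc⟩ := h2
      refine ⟨X, hX, Y, hY, e, b, c, Or.inl ⟨heX, heY⟩, Or.inr hb, Or.inr hc,
        fun h => heY (h ▸ hb.1), fun h => heY (h ▸ hc.1), hbc, ?_⟩
      intro Z hZ hZsub
      by_cases heZ : e ∈ Z
      · exact Or.inl heZ
      · have hkey := key_lemma hmin ⟨hX, hY, heX, heY, hf5⟩ hn Z hZ hZsub heZ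
        refine Or.inr fun x hx => ?_
        simp only [Set.mem_insert_iff, Set.mem_singleton_iff] at hx
        rcases hx with rfl | rfl
        exacts [hkey hb, hkey hc]
    · -- Y \ X = {f}
      obtain ⟨f, hf⟩ := hYX
      have hsingle : Y \ X = {f} := by
        apply Set.eq_singleton_iff_unique_mem.mpr
        refine ⟨hf, fun y hy => ?_⟩
        by_contra hne'
        exact h2 ⟨y, hy, f, hf, hne'⟩
      have hYsub : Y \ {f} ⊆ X := by
        intro y hy
        by_contra hyX
        have : y ∈ Y \ X := ⟨hy.1, hyX⟩
        rw [hsingle] at this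
        exact hy.2 this
      -- there is g ∈ X \ Y with g ≠ e
      have hg : ∃ g, g ∈ X ∧ g ∉ Y ∧ g ≠ e := by
        by_contra hcon
        push_neg at hcon
        -- then X \ Y = {e}, so insert f (X \ {e}) = Y ∈ 𝓕, contradiction
        have heqY : insert f (X \ {e}) = Y := by
          apply Set.Subset.antisymm
          · intro x hx
            rcases hx with rfl | ⟨hx1, hx2⟩
            · exact hf.1
            · by_contra hxY
              exact hx2 (hcon x hx1 hxY)
          · intro y hy
            by_cases hyf : y = f
            · rw [hyf]; exact mem_insert f _
            · have hyX : y ∈ X := hYsub ⟨hy, hyf⟩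
              have hye : y ≠ e := fun h => heY (h ▸ hy)
              exact Or.inr ⟨hyX, hye⟩
        exact hf5 f hf.1 hf.2 (heqY ▸ hY)
      obtain ⟨g, hgX, hgY, hge⟩ := hg
      -- reversed failing triple (Y, X, f)
      have hfail' : FailTriple 𝓕 Y X f := by
        refine ⟨hY, hX, hf.1, hf.2, fun g' hg' hg'Y hmem => ?_⟩
        have hsubX : insert g' (Y \ {f}) ⊆ X := insert_subset hg' hYsub
        have heqX : insert g' (Y \ {f}) = X := hclutter _ hmem X hX hsubX
        -- one of e, g is in X but not in insert g' (Y \ {f})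
        have hkey : ∀ x, x ∈ X → x ∉ Y → x ∈ insert g' (Y \ {f}) → x = g' := by
          intro x hx1 hx2 hx3
          rcases hx3 with rfl | ⟨hx4, _⟩
          · rfl
          · exact absurd hx4 hx2
        have he' : e = g' := hkey e heX heY (heqX ▸ heX)
        have hg'' : g = g' := hkey g hgX hgY (heqX ▸ hgX)
        exact hge (hg''.symm ▸ he'.symm ▸ rfl)
      have hn' : (Y ∪ X).ncard = n := by rw [union_comm]; exact hn
      have hkey := key_lemma hmin hfail' hn'
      refine ⟨X, hX, Y, hY, f, e, g, Or.inr hf, Or.inl ⟨heX, heY⟩, Or.inl ⟨hgX, hgY⟩,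
        fun h => hf.2 (h ▸ heX), fun h => hf.2 (h ▸ hgX), fun h => hge h.symm, ?_⟩
      intro Z hZ hZsub
      by_cases hfZ : f ∈ Z
      · exact Or.inl hfZ
      · have hXY := hkey Z hZ (by rwa [union_comm]) hfZ
        refine Or.inr ?_
        intro x hx
        simp only [Set.mem_insert_iff, Set.mem_singleton_iff] at hx
        rcases hx with rfl | rfl
        exacts [hXY ⟨heX, heY⟩, hXY ⟨hgX, hgY⟩]
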